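/- (Theorem 6.32: the trace class equals the adjointable compact operators.) Assume in addition that K is proper (locally compact). For a continuous K-linear operator T : H →L[K] H, the following are equivalent: (a) T is of trace class, i.e. Tendsto (fun q : ℕ × ℕ => (T (e q.2)) q.1) Filter.cofinite (nhds 0); (b) T is a compact operator (IsCompactOperator T) and T is adjointable (there exists S : H →L[K] H with ⟪x, T y⟫ = ⟪S x, y⟫ for all x, y). -/

import Mathlib

open Filter

noncomputable section

variable (K : Type*) [NontriviallyNormedField K] [IsUltrametricDist K]
  [CompleteSpace K] [StarRing K] [NormedStarGroup K]

/-- The p-adic coordinate Hilbert space: zero-convergent sequences in `K` with sup norm. -/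
abbrev H := ZeroAtInftyContinuousMap ℕ K

/-- The standard basis vectors of `H K`. -/
def e (n : ℕ) : H K where
  toFun := fun m => if m = n then 1 else 0
  continuous_toFun := continuous_of_discreteTopology
  zero_at_infty' := by
    rw [cocompact_eq_atTop]
    refine Filter.Tendsto.congr' ?_ tendsto_const_nhds
    filter_upwards [Filter.eventually_gt_atTop n] with m hm
    simp [Nat.ne_of_gt hm]

/-- The canonical inner product on `H K`: `⟪x, y⟫ = ∑' i, star (x i) * y i`. -/
def inner' (x y : H K) : K := ∑' i, star (x i) * y i

/-- A bounded operator is of trace class if its matrix entries vanish along the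
cofinite filter of `ℕ × ℕ`. -/
def IsTraceClass (T : H K →L[K] H K) : Prop :=
  Tendsto (fun q : ℕ × ℕ => (T (e K q.2)) q.1) Filter.cofinite (nhds 0)


section Aux
set_option linter.unusedSectionVars false
variable {K}


lemma norm_apply_le (x : H K) (i : ℕ) : ‖x i‖ ≤ ‖x‖ := by
  rw [← ZeroAtInftyContinuousMap.norm_toBCF_eq_norm]
  exact BoundedContinuousFunction.norm_coe_le_norm x.toBCF i

lemma norm_le_of (x : H K) {C : ℝ} (hC : 0 ≤ C) (h : ∀ i, ‖x i‖ ≤ C) : ‖x‖ ≤ C := by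
  rw [← ZeroAtInftyContinuousMap.norm_toBCF_eq_norm]
  exact BoundedContinuousFunction.norm_le hC |>.2 h

lemma tendsto_apply (x : H K) : Tendsto (fun i => x i) atTop (nhds 0) := by
  have := x.zero_at_infty'
  rwa [cocompact_eq_atTop] at this

lemma e_apply (n m : ℕ) : e K n m = if m = n then 1 else 0 := rfl

lemma norm_e (n : ℕ) : ‖e K n‖ = 1 := by
  apply le_antisymm
  · apply norm_le_of _ zero_le_one
    intro m
    rw [e_apply]
    split <;> simp
  · calc (1 : ℝ) = ‖e K n n‖ := by rw [e_apply]; simp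
    _ ≤ ‖e K n‖ := norm_apply_le _ _

/-- Build an element of `H K` from a zero-convergent sequence. -/
def mk' (f : ℕ → K) (hf : Tendsto f atTop (nhds 0)) : H K where
  toFun := f
  continuous_toFun := continuous_of_discreteTopology
  zero_at_infty' := by rwa [cocompact_eq_atTop]

lemma mk'_apply (f : ℕ → K) (hf : Tendsto f atTop (nhds 0)) (m : ℕ) : mk' f hf m = f m := rfl

/-- Evaluation at a coordinate as a continuous linear map. -/
def ev (i : ℕ) : H K →L[K] K :=
  LinearMap.mkContinuous
    { toFun := fun x => x i
      map_add' := fun x y => rfl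
      map_smul' := fun c x => rfl } 1
    (fun x => by simpa using norm_apply_le x i)

lemma ev_apply (i : ℕ) (x : H K) : ev i x = x i := rfl

lemma coord_sum (s : Finset ℕ) (x : H K) (m : ℕ) :
    (∑ j ∈ s, x j • e K j) m = if m ∈ s then x m else 0 := by
  have : (∑ j ∈ s, x j • e K j) m = ev m (∑ j ∈ s, x j • e K j) := rfl
  rw [this, map_sum]
  simp only [ev_apply, ZeroAtInftyContinuousMap.smul_apply, e_apply, smul_eq_mul,
    mul_ite, mul_one, mul_zero]
  exact Finset.sum_ite_eq s m x

lemma hasSum_coords (x : H K) : HasSum (fun j => x j • e K j) x := by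
  rw [HasSum, SummationFilter.unconditional_filter, Metric.tendsto_atTop]
  intro ε hε
  obtain ⟨N, hN⟩ := (Metric.tendsto_atTop.1 (tendsto_apply x)) (ε / 2) (by linarith)
  refine ⟨Finset.range N, fun s hs => ?_⟩
  rw [dist_eq_norm]
  have h1 : ∀ m, ‖(∑ j ∈ s, x j • e K j - x) m‖ ≤ ε / 2 := by
    intro m
    rw [ZeroAtInftyContinuousMap.sub_apply, coord_sum]
    by_cases hm : m ∈ s
    · simp [hm]; linarith
    · have hmN : N ≤ m := by
        by_contra hlt
        exact hm (hs (Finset.mem_range.2 (not_le.1 hlt)))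
      have := hN m hmN
      rw [dist_zero_right] at this
      simp only [hm, if_false, zero_sub, norm_neg]
      linarith
  exact lt_of_le_of_lt (norm_le_of _ (by linarith) h1) (by linarith)

lemma norm_entry_le (T : H K →L[K] H K) (i j : ℕ) : ‖(T (e K j)) i‖ ≤ ‖T‖ := by
  calc ‖(T (e K j)) i‖ ≤ ‖T (e K j)‖ := norm_apply_le _ _
    _ ≤ ‖T‖ * ‖e K j‖ := T.le_opNorm _
    _ = ‖T‖ := by rw [norm_e, mul_one]

lemma hasSum_apply_coord (T : H K →L[K] H K) (y : H K) (i : ℕ) :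
    HasSum (fun j => y j * (T (e K j)) i) ((T y) i) := by
  have h := (hasSum_coords y).mapL ((ev i).comp T)
  simpa only [ContinuousLinearMap.coe_comp', Function.comp_apply, map_smul, ev_apply,
    smul_eq_mul] using h

lemma apply_coord (T : H K →L[K] H K) (y : H K) (i : ℕ) :
    (T y) i = ∑' j, y j * (T (e K j)) i :=
  (hasSum_apply_coord T y i).tsum_eq.symm

lemma inner'_e_left (i : ℕ) (z : H K) : inner' K (e K i) z = z i := by
  rw [inner']
  rw [tsum_eq_single i]
  · simp [e_apply]
  · intro m hm
    simp [e_apply, hm]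

lemma inner'_e_right (j : ℕ) (z : H K) : inner' K z (e K j) = star (z j) := by
  rw [inner']
  rw [tsum_eq_single j]
  · simp [e_apply]
  · intro m hm
    simp [e_apply, hm]


lemma IsTraceClass.finite_bad {T : H K →L[K] H K} (hT : IsTraceClass K T) {δ : ℝ} (hδ : 0 < δ) :
    {q : ℕ × ℕ | δ ≤ ‖(T (e K q.2)) q.1‖}.Finite := by
  have h := (NormedAddCommGroup.tendsto_nhds_zero.1 hT) δ hδ
  have := Filter.eventually_cofinite.1 h
  convert this using 1
  ext q
  simp [not_lt]

lemma IsTraceClass.exists_row_bound {T : H K →L[K] H K} (hT : IsTraceClass K T) {δ : ℝ}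
    (hδ : 0 < δ) : ∃ N : ℕ, ∀ i j : ℕ, N ≤ i → ‖(T (e K j)) i‖ < δ := by
  have hF := hT.finite_bad hδ
  refine ⟨hF.toFinset.sup (fun q => q.1) + 1, fun i j hi => ?_⟩
  by_contra hc
  have hmem : (i, j) ∈ hF.toFinset := by
    rw [Set.Finite.mem_toFinset]
    exact not_lt.1 hc
  have := Finset.le_sup (f := fun q : ℕ × ℕ => q.1) hmem
  simp only at this
  omega

lemma IsTraceClass.exists_col_bound {T : H K →L[K] H K} (hT : IsTraceClass K T) {δ : ℝ}
    (hδ : 0 < δ) : ∃ N : ℕ, ∀ i j : ℕ, N ≤ j → ‖(T (e K j)) i‖ < δ := by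
  have hF := hT.finite_bad hδ
  refine ⟨hF.toFinset.sup (fun q => q.2) + 1, fun i j hj => ?_⟩
  by_contra hc
  have hmem : (i, j) ∈ hF.toFinset := by
    rw [Set.Finite.mem_toFinset]
    exact not_lt.1 hc
  have := Finset.le_sup (f := fun q : ℕ × ℕ => q.2) hmem
  simp only at this
  omega

lemma summable_row (T : H K →L[K] H K) (x : H K) (j : ℕ) :
    Summable (fun i => star ((T (e K j)) i) * x i) := by
  apply NonarchimedeanAddGroup.summable_of_tendsto_cofinite_zero
  rw [Nat.cofinite_eq_atTop]
  refine squeeze_zero_norm (fun i => ?_) (a := fun i => ‖T‖ * ‖x i‖)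
    (by simpa using (tendsto_apply x).norm.const_mul ‖T‖)
  rw [norm_mul, norm_star]
  exact mul_le_mul_of_nonneg_right (norm_entry_le T i j) (norm_nonneg _)

lemma tendsto_adjRow {T : H K →L[K] H K} (hT : IsTraceClass K T) (x : H K) :
    Tendsto (fun j => ∑' i, star ((T (e K j)) i) * x i) atTop (nhds 0) := by
  rw [Metric.tendsto_atTop]
  intro ε hε
  have hx1 : (0:ℝ) < ‖x‖ + 1 := by positivity
  set δ := ε / (‖x‖ + 1) with hδdef
  have hδ : 0 < δ := div_pos hε hx1
  obtain ⟨N, hN⟩ := hT.exists_col_bound hδ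
  refine ⟨N, fun j hj => ?_⟩
  rw [dist_zero_right]
  have hle : ‖∑' i, star ((T (e K j)) i) * x i‖ ≤ δ * ‖x‖ := by
    apply IsUltrametricDist.norm_tsum_le_of_forall_le_of_nonneg
      (by positivity)
    intro i
    rw [norm_mul, norm_star]
    exact mul_le_mul (le_of_lt (hN i j hj)) (norm_apply_le x i) (norm_nonneg _) hδ.le
  calc ‖∑' i, star ((T (e K j)) i) * x i‖ ≤ δ * ‖x‖ := hle
    _ < δ * (‖x‖ + 1) := by nlinarith
    _ = ε := div_mul_cancel₀ ε (ne_of_gt hx1)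

/-- The adjoint of a trace-class operator. -/
def adj (T : H K →L[K] H K) (hT : IsTraceClass K T) : H K →L[K] H K :=
  LinearMap.mkContinuous
    { toFun := fun x => mk' (fun j => ∑' i, star ((T (e K j)) i) * x i) (tendsto_adjRow hT x)
      map_add' := fun x y => by
        ext j
        simp only [mk'_apply, ZeroAtInftyContinuousMap.add_apply]
        rw [← Summable.tsum_add (summable_row T x j) (summable_row T y j)]
        congr 1
        ext i
        ring
      map_smul' := fun c x => by
        ext j
        simp only [mk'_apply, RingHom.id_apply, ZeroAtInftyContinuousMap.smul_apply,
          smul_eq_mul]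
        rw [← tsum_mul_left]
        congr 1
        ext i
        ring }
    ‖T‖
    (fun x => by
      apply norm_le_of _ (by positivity)
      intro j
      simp only [LinearMap.coe_mk, AddHom.coe_mk, mk'_apply]
      apply IsUltrametricDist.norm_tsum_le_of_forall_le_of_nonneg (by positivity)
      intro i
      rw [norm_mul, norm_star]
      exact mul_le_mul (norm_entry_le T i j) (norm_apply_le x i) (norm_nonneg _) (norm_nonneg T))

lemma adj_apply {T : H K →L[K] H K} (hT : IsTraceClass K T) (x : H K) (j : ℕ) :
    (adj T hT x) j = ∑' i, star ((T (e K j)) i) * x i := rfl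

lemma adj_spec {T : H K →L[K] H K} (hT : IsTraceClass K T) (x y : H K) :
    inner' K x (T y) = inner' K (adj T hT x) y := by
  set f : ℕ → ℕ → K := fun i j => star (x i) * (y j * (T (e K j)) i) with hf
  have hsum : Summable (Function.uncurry f) := by
    apply NonarchimedeanAddGroup.summable_of_tendsto_cofinite_zero
    refine squeeze_zero_norm (a := fun q : ℕ × ℕ => (‖x‖ * ‖y‖) * ‖(T (e K q.2)) q.1‖)
      (fun q => ?_) (by simpa using hT.norm.const_mul (‖x‖ * ‖y‖))
    simp only [Function.uncurry, hf, norm_mul, norm_star]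
    calc ‖x q.1‖ * (‖y q.2‖ * ‖(T (e K q.2)) q.1‖)
        ≤ ‖x‖ * (‖y‖ * ‖(T (e K q.2)) q.1‖) := by
          gcongr
          · exact norm_apply_le x q.1
          · exact norm_apply_le y q.2
      _ = ‖x‖ * ‖y‖ * ‖(T (e K q.2)) q.1‖ := by ring
  have h1 : inner' K x (T y) = ∑' i, ∑' j, f i j := by
    rw [inner']
    congr 1
    ext i
    rw [apply_coord, ← tsum_mul_left]
  have h2 : inner' K (adj T hT x) y = ∑' j, ∑' i, f i j := by
    rw [inner']
    congr 1
    ext j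
    have hstar : star ((adj T hT x) j) = ∑' i, star (x i) * (T (e K j)) i := by
      rw [adj_apply]
      rw [((summable_row T x j).hasSum.star).tsum_eq.symm]
      congr 1
      ext i
      rw [star_mul, star_star]
    rw [hstar, ← tsum_mul_right]
    congr 1
    ext i
    simp only [hf]
    ring
  rw [h1, h2, Summable.tsum_comm hsum]

section Proper
variable [ProperSpace K]

lemma totallyBounded_image {T : H K →L[K] H K} (hT : IsTraceClass K T) :
    TotallyBounded (⇑T '' Metric.closedBall 0 1) := by
  rw [Metric.totallyBounded_iff]
  intro ε hε
  obtain ⟨N, hN⟩ := hT.exists_row_bound (half_pos hε)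
  set B : Set (Fin N → K) := Set.univ.pi (fun _ => Metric.closedBall 0 ‖T‖) with hB
  have hBc : IsCompact B := isCompact_univ_pi (fun _ => isCompact_closedBall _ _)
  obtain ⟨t, htf, hcover⟩ := Metric.totallyBounded_iff.1 hBc.totallyBounded (ε/2) (half_pos hε)
  have hΦt : ∀ w : Fin N → K, Tendsto (fun m => if h : m < N then w ⟨m, h⟩ else 0)
      atTop (nhds (0 : K)) := by
    intro w
    refine Tendsto.congr' ?_ tendsto_const_nhds
    filter_upwards [Filter.eventually_ge_atTop N] with m hm
    rw [dif_neg (by omega)]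
  set Φ : (Fin N → K) → H K := fun w => mk' _ (hΦt w) with hΦ
  refine ⟨Φ '' t, htf.image Φ, ?_⟩
  rintro - ⟨x, hx, rfl⟩
  rw [Metric.mem_closedBall, dist_zero_right] at hx
  set wx : Fin N → K := fun i => (T x) i with hwx
  have hwxB : wx ∈ B := by
    intro i _
    rw [Metric.mem_closedBall, dist_zero_right]
    calc ‖(T x) (i : ℕ)‖ ≤ ‖T x‖ := norm_apply_le _ _
      _ ≤ ‖T‖ * ‖x‖ := T.le_opNorm x
      _ ≤ ‖T‖ * 1 := by gcongr
      _ = ‖T‖ := mul_one _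
  obtain ⟨w, hw, hwd⟩ := Set.mem_iUnion₂.1 (hcover hwxB)
  rw [Metric.mem_ball] at hwd
  refine Set.mem_iUnion₂.2 ⟨Φ w, Set.mem_image_of_mem Φ hw, ?_⟩
  rw [Metric.mem_ball, dist_eq_norm]
  have hcoord : ∀ m, ‖(T x - Φ w) m‖ ≤ ε / 2 := by
    intro m
    rw [ZeroAtInftyContinuousMap.sub_apply]
    by_cases h : m < N
    · have : (Φ w) m = w ⟨m, h⟩ := dif_pos h
      rw [this]
      have := dist_le_pi_dist wx w ⟨m, h⟩
      rw [dist_eq_norm] at this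
      exact le_trans this hwd.le
    · have : (Φ w) m = 0 := dif_neg h
      rw [this, sub_zero, apply_coord]
      apply IsUltrametricDist.norm_tsum_le_of_forall_le_of_nonneg (half_pos hε).le
      intro j
      rw [norm_mul]
      calc ‖x j‖ * ‖(T (e K j)) m‖ ≤ 1 * (ε / 2) := by
            apply mul_le_mul (le_trans (norm_apply_le x j) hx)
              (hN m j (not_lt.1 h)).le (norm_nonneg _) zero_le_one
        _ = ε / 2 := one_mul _
  exact lt_of_le_of_lt (norm_le_of _ (half_pos hε).le hcoord) (half_lt_self hε)

lemma isCompactOperator_of_traceClass {T : H K →L[K] H K} (hT : IsTraceClass K T) :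
    IsCompactOperator T := by
  refine ⟨closure (⇑T '' Metric.closedBall 0 1), ?_, ?_⟩
  · exact TotallyBounded.isCompact_of_isClosed (totallyBounded_image hT).closure isClosed_closure
  · exact Filter.mem_of_superset (Metric.closedBall_mem_nhds 0 one_pos)
      (fun z hz => subset_closure ⟨z, hz, rfl⟩)

end Proper

lemma traceClass_of_compact_adjointable {T : H K →L[K] H K} (hc : IsCompactOperator T)
    (S : H K →L[K] H K) (hS : ∀ x y : H K, inner' K x (T y) = inner' K (S x) y) :
    IsTraceClass K T := by
  have hentry : ∀ i j : ℕ, (T (e K j)) i = star ((S (e K i)) j) := by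
    intro i j
    have := hS (e K i) (e K j)
    rwa [inner'_e_left, inner'_e_right] at this
  rw [IsTraceClass, NormedAddCommGroup.tendsto_nhds_zero]
  intro ε hε
  rw [Filter.eventually_cofinite]
  -- uniform decay in the row index from compactness
  obtain ⟨C, hCc, hCnhds⟩ := hc
  obtain ⟨r, hr, hball⟩ := Metric.mem_nhds_iff.1 hCnhds
  obtain ⟨c, hc0, hcr⟩ := NormedField.exists_norm_lt K hr
  set δ := ε * ‖c‖ with hδdef
  have hδ : 0 < δ := mul_pos hε hc0
  -- every element of C has uniformly small tails
  obtain ⟨t, htf, hcover⟩ := Metric.totallyBounded_iff.1 hCc.totallyBounded (δ/2) (half_pos hδ)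
  have hz : ∀ z : H K, ∃ N, ∀ i, N ≤ i → ‖z i‖ < δ / 2 := by
    intro z
    obtain ⟨N, hN⟩ := Metric.tendsto_atTop.1 (tendsto_apply z) (δ/2) (half_pos hδ)
    exact ⟨N, fun i hi => by simpa [dist_zero_right] using hN i hi⟩
  choose Nf hNf using hz
  set N := htf.toFinset.sup Nf with hNdef
  have htail : ∀ y ∈ C, ∀ i, N ≤ i → ‖y i‖ < δ := by
    intro y hy i hi
    obtain ⟨z, hzt, hyz⟩ := Set.mem_iUnion₂.1 (hcover hy)
    rw [Metric.mem_ball, dist_eq_norm] at hyz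
    have h1 : ‖y i - z i‖ < δ / 2 := by
      calc ‖y i - z i‖ = ‖(y - z) i‖ := by rw [ZeroAtInftyContinuousMap.sub_apply]
        _ ≤ ‖y - z‖ := norm_apply_le _ _
        _ < δ / 2 := hyz
    have h2 : ‖z i‖ < δ / 2 := hNf z i (le_trans (Finset.le_sup (htf.mem_toFinset.2 hzt)) hi)
    calc ‖y i‖ = ‖(y i - z i) + z i‖ := by ring_nf
      _ ≤ ‖y i - z i‖ + ‖z i‖ := norm_add_le _ _
      _ < δ / 2 + δ / 2 := add_lt_add h1 h2
      _ = δ := add_halves δ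
  have hcol : ∀ i j : ℕ, N ≤ i → ‖(T (e K j)) i‖ < ε := by
    intro i j hi
    have hmem : T (c • e K j) ∈ C := by
      apply hball
      rw [Metric.mem_ball, dist_zero_right]
      calc ‖c • e K j‖ = ‖c‖ * ‖e K j‖ := norm_smul c (e K j)
        _ = ‖c‖ := by rw [norm_e, mul_one]
        _ < r := hcr
    have := htail _ hmem i hi
    rw [map_smul, ZeroAtInftyContinuousMap.smul_apply, smul_eq_mul, norm_mul] at this
    rw [hδdef, mul_comm ε ‖c‖] at this
    exact lt_of_mul_lt_mul_left this (norm_nonneg c)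
  -- rows are individually finite from the adjoint
  have hrow : ∀ i : ℕ, {j : ℕ | ε ≤ ‖(T (e K j)) i‖}.Finite := by
    intro i
    have h1 : Tendsto (fun j => (S (e K i)) j) cofinite (nhds 0) := by
      rw [Nat.cofinite_eq_atTop]; exact tendsto_apply _
    have h2 := Filter.eventually_cofinite.1
      ((NormedAddCommGroup.tendsto_nhds_zero.1 h1) ε hε)
    apply h2.subset
    intro j hj
    simp only [Set.mem_setOf_eq, not_lt] at *
    rwa [hentry, norm_star] at hj
  apply Set.Finite.subset ((Set.finite_Iio N).biUnion
    (fun i _ => (hrow i).image (fun j => (i, j))))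
  intro q hq
  simp only [Set.mem_setOf_eq, not_lt] at hq
  have hq1 : q.1 < N := by
    by_contra h
    exact absurd hq (not_le.2 (hcol q.1 q.2 (not_lt.1 h)))
  exact Set.mem_biUnion hq1 ⟨q.2, hq, by simp⟩

end Aux

/-- The trace class coincides with the adjointable compact operators. -/

theorem stmt16 [ProperSpace K] (T : H K →L[K] H K) :
    IsTraceClass K T ↔
      (IsCompactOperator T ∧
        ∃ S : H K →L[K] H K, ∀ x y : H K, inner' K x (T y) = inner' K (S x) y) := by
  constructor
  · intro hT
    exact ⟨isCompactOperator_of_traceClass hT, ⟨adj T hT, fun x y => adj_spec hT x y⟩⟩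
  · rintro ⟨hc, S, hS⟩
    exact traceClass_of_compact_adjointable hc S hS
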